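/- Let Δ > 0, T ≥ 1 with TΔ² > 4√(2πe), and g(x) = x + T·Φ(-Δ√(x/2)) where Φ is the standard Gaussian CDF. Then g attains its minimum over (0,∞) at x* = (2/Δ²)·W(T²Δ⁴/(32π)), and Φ(-Δ√(x*/2)) ≤ 4/(TΔ²). -/

import Mathlib

open Real MeasureTheory ProbabilityTheory Filter Topology

noncomputable def stdPdf (y : ℝ) : ℝ := (Real.sqrt (2 * π))⁻¹ * Real.exp (-y ^ 2 / 2)

lemma stdPdf_pos (y : ℝ) : 0 < stdPdf y := by
  unfold stdPdf
  positivity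

lemma stdPdf_eq : gaussianPDFReal 0 1 = stdPdf := by
  ext x
  simp [gaussianPDFReal, stdPdf, neg_div]

lemma stdPdf_continuous : Continuous stdPdf := by
  unfold stdPdf
  fun_prop

lemma stdPdf_integrable : Integrable stdPdf := stdPdf_eq ▸ integrable_gaussianPDFReal 0 1

lemma cdf_gauss_eq (t : ℝ) :
    cdf (gaussianReal 0 1) t = ∫ x in Set.Iic t, stdPdf x := by
  rw [cdf_eq_real, measureReal_def, gaussianReal_apply_eq_integral 0 one_ne_zero, ENNReal.toReal_ofReal,
    stdPdf_eq]
  exact setIntegral_nonneg measurableSet_Iic fun x _ => gaussianPDFReal_nonneg 0 1 x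

lemma hasDerivAt_gaussCdf (t : ℝ) :
    HasDerivAt (fun s => cdf (gaussianReal 0 1) s) (stdPdf t) t := by
  have key : (fun s => cdf (gaussianReal 0 1) s)
      = fun s => cdf (gaussianReal 0 1) 0 + ∫ u in (0:ℝ)..s, stdPdf u := by
    funext s
    rw [cdf_gauss_eq, cdf_gauss_eq,
      ← intervalIntegral.integral_Iic_sub_Iic stdPdf_integrable.integrableOn
        stdPdf_integrable.integrableOn]
    ring
  rw [key]
  have hF : HasDerivAt (fun s => ∫ u in (0:ℝ)..s, stdPdf u) (stdPdf t) t :=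
    intervalIntegral.integral_hasDerivAt_right
      (stdPdf_integrable.intervalIntegrable)
      (stdPdf_continuous.stronglyMeasurable.stronglyMeasurableAtFilter)
      stdPdf_continuous.continuousAt
  exact ((hasDerivAt_const t (cdf (gaussianReal 0 1) 0)).add hF).congr_deriv (zero_add _)

lemma hasDerivAt_stdPdf (t : ℝ) : HasDerivAt stdPdf (-(t * stdPdf t)) t := by
  have h1 : HasDerivAt (fun y : ℝ => -y ^ 2 / 2) (-t) t := by
    have := ((hasDerivAt_pow 2 t).neg).div_const 2
    simpa using this.congr_deriv (by ring)
  have := (h1.exp).const_mul ((Real.sqrt (2 * π))⁻¹)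
  unfold stdPdf
  exact this.congr_deriv (by ring)

lemma hasDerivAt_gaussCdf_neg (t : ℝ) :
    HasDerivAt (fun s => cdf (gaussianReal 0 1) (-s)) (-(stdPdf t)) t := by
  have := (hasDerivAt_gaussCdf (-t)).comp t (hasDerivAt_neg t)
  have he : stdPdf (-t) = stdPdf t := by unfold stdPdf; rw [neg_pow]; ring_nf
  simpa [he, Function.comp_def] using this

lemma gauss_tail {y : ℝ} (hy : 0 < y) :
    cdf (gaussianReal 0 1) (-y) ≤ stdPdf y / y := by
  set h : ℝ → ℝ := fun s => stdPdf s / s - cdf (gaussianReal 0 1) (-s) with hh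
  have hderiv : ∀ s : ℝ, 0 < s → HasDerivAt h (-(stdPdf s / s ^ 2)) s := by
    intro s hs
    have h1 : HasDerivAt (fun u => stdPdf u / u)
        ((-(s * stdPdf s) * s - stdPdf s * 1) / s ^ 2) s :=
      (hasDerivAt_stdPdf s).div (hasDerivAt_id s) hs.ne'
    have := h1.sub (hasDerivAt_gaussCdf_neg s)
    exact this.congr_deriv (by have := hs.ne'; field_simp; ring)
  have hmono : AntitoneOn h (Set.Ici y) := by
    refine antitoneOn_of_deriv_nonpos (convex_Ici y) ?_ ?_ ?_
    · intro x hx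
      exact ((hderiv x (hy.trans_le hx)).continuousAt).continuousWithinAt
    · intro x hx
      rw [interior_Ici] at hx
      exact ((hderiv x (hy.trans hx)).differentiableAt).differentiableWithinAt
    · intro x hx
      rw [interior_Ici] at hx
      rw [(hderiv x (hy.trans hx)).deriv]
      have hx0 : 0 < x := hy.trans hx
      have : 0 < stdPdf x / x ^ 2 := div_pos (stdPdf_pos x) (pow_pos hx0 2)
      linarith
  have htend : Tendsto h atTop (𝓝 0) := by
    have t1 : Tendsto (fun s : ℝ => stdPdf s / s) atTop (𝓝 0) := by
      have tg : Tendsto (fun s : ℝ => (Real.sqrt (2 * π))⁻¹ * s⁻¹) atTop (𝓝 0) := by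
        simpa using tendsto_inv_atTop_zero.const_mul ((Real.sqrt (2 * π))⁻¹)
      apply squeeze_zero' (Filter.eventually_atTop.2 ⟨1, fun s hs => ?_⟩)
        (Filter.eventually_atTop.2 ⟨1, fun s hs => ?_⟩) tg
      · have := stdPdf_pos s
        positivity
      · have h1 : stdPdf s ≤ (Real.sqrt (2 * π))⁻¹ := by
          unfold stdPdf
          have he : Real.exp (-s ^ 2 / 2) ≤ 1 := by
            rw [Real.exp_le_one_iff]
            nlinarith
          exact mul_le_of_le_one_right (by positivity) he
        rw [div_eq_mul_inv]
        exact mul_le_mul_of_nonneg_right h1 (by positivity)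
    have t2 : Tendsto (fun s : ℝ => cdf (gaussianReal 0 1) (-s)) atTop (𝓝 0) :=
      (tendsto_cdf_atBot (gaussianReal 0 1)).comp tendsto_neg_atTop_atBot
    simpa using t1.sub t2
  have h0 : 0 ≤ h y := by
    refine le_of_tendsto htend (Filter.eventually_atTop.2 ⟨y, fun x hx => ?_⟩)
    exact hmono (Set.mem_Ici.2 le_rfl) hx hx
  simp only [hh] at h0
  linarith

theorem fixed_budget_optimal_n (Δ T : ℝ) (hΔ : 0 < Δ) (hT : 1 ≤ T)
    (hTΔ : 4 * Real.sqrt (2 * π * Real.exp 1) < T * Δ ^ 2)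
    (w : ℝ) (hw : 0 < w) (hwe : w * Real.exp w = T ^ 2 * Δ ^ 4 / (32 * π)) :
    (2 / Δ ^ 2) * w ∈ Set.Ioi (0 : ℝ) ∧
      IsMinOn (fun x : ℝ => x + T * cdf (gaussianReal 0 1) (-Δ * Real.sqrt (x / 2)))
        (Set.Ioi (0 : ℝ)) ((2 / Δ ^ 2) * w) ∧
      cdf (gaussianReal 0 1) (-Δ * Real.sqrt ((2 / Δ ^ 2) * w / 2)) ≤ 4 / (T * Δ ^ 2) := by
  have hπ : 0 < π := Real.pi_pos
  have hΔ2 : 0 < Δ ^ 2 := by positivity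
  have hT0 : 0 < T := lt_of_lt_of_le one_pos hT
  set s := Real.sqrt w with hs
  have hs0 : 0 < s := Real.sqrt_pos.2 hw
  have hs2 : s ^ 2 = w := Real.sq_sqrt hw.le
  have hS : 0 < Real.sqrt (2 * π) := Real.sqrt_pos.2 (by positivity)
  have h2pi : Real.sqrt (2 * π) ^ 2 = 2 * π := Real.sq_sqrt (by positivity)
  have hew : Real.exp (w / 2) ^ 2 = Real.exp w := by
    rw [sq, ← Real.exp_add]; ring_nf
  have hE : 0 < Real.exp (w / 2) := Real.exp_pos _
  -- key identity
  have hwe' : T ^ 2 * Δ ^ 4 = 32 * π * (w * Real.exp w) := by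
    field_simp at hwe; linarith
  have hKsq : (T * Δ ^ 2) ^ 2 = (4 * s * Real.sqrt (2 * π) * Real.exp (w / 2)) ^ 2 := by
    have h1 : (4 * s * Real.sqrt (2 * π) * Real.exp (w / 2)) ^ 2
        = 16 * s ^ 2 * Real.sqrt (2 * π) ^ 2 * Real.exp (w / 2) ^ 2 := by ring
    rw [h1, hs2, h2pi, hew]
    nlinarith [hwe']
  have hK' : T * Δ ^ 2 = 4 * s * Real.sqrt (2 * π) * Real.exp (w / 2) := by
    have habs : |T * Δ ^ 2| = |4 * s * Real.sqrt (2 * π) * Real.exp (w / 2)| := by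
      rw [← Real.sqrt_sq_eq_abs, ← Real.sqrt_sq_eq_abs, hKsq]
    rwa [abs_of_pos (by positivity), abs_of_pos (by positivity)] at habs
  have hK : T * stdPdf s = 4 * s / Δ ^ 2 := by
    unfold stdPdf
    rw [hs2, show -w / 2 = -(w / 2) by ring, Real.exp_neg, eq_div_iff hΔ2.ne']
    rw [show T * ((Real.sqrt (2 * π))⁻¹ * (Real.exp (w / 2))⁻¹) * Δ ^ 2
      = (T * Δ ^ 2) * ((Real.sqrt (2 * π))⁻¹ * (Real.exp (w / 2))⁻¹) from by ring, hK']
    field_simp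
  -- pdf is antitone on nonneg reals
  have hpdf_mono : ∀ a b : ℝ, 0 ≤ a → a ≤ b → stdPdf b ≤ stdPdf a := by
    intro a b ha hab
    unfold stdPdf
    have : Real.exp (-b ^ 2 / 2) ≤ Real.exp (-a ^ 2 / 2) := by
      apply Real.exp_le_exp.2; nlinarith
    exact mul_le_mul_of_nonneg_left this (by positivity)
  -- the substituted function and its derivative
  set f : ℝ → ℝ := fun y => 2 * y ^ 2 / Δ ^ 2 + T * cdf (gaussianReal 0 1) (-y) with hfdef
  have hf : ∀ y : ℝ, HasDerivAt f (4 * y / Δ ^ 2 - T * stdPdf y) y := by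
    intro y
    have h1 : HasDerivAt (fun y : ℝ => 2 * y ^ 2 / Δ ^ 2) (4 * y / Δ ^ 2) y := by
      have := ((hasDerivAt_pow 2 y).const_mul (2 : ℝ)).div_const (Δ ^ 2)
      exact this.congr_deriv (by ring)
    have h2 := (hasDerivAt_gaussCdf_neg y).const_mul T
    have := h1.add h2
    exact this.congr_deriv (by ring)
  have hmono : MonotoneOn f (Set.Ici s) := by
    refine monotoneOn_of_deriv_nonneg (convex_Ici s) ?_ ?_ ?_
    · exact fun x _ => (hf x).continuousAt.continuousWithinAt
    · exact fun x _ => (hf x).differentiableAt.differentiableWithinAt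
    · intro x hx
      rw [interior_Ici] at hx
      rw [(hf x).deriv]
      have h1 : T * stdPdf x ≤ T * stdPdf s :=
        mul_le_mul_of_nonneg_left (hpdf_mono s x hs0.le hx.le) hT0.le
      have h2 : 4 * s / Δ ^ 2 ≤ 4 * x / Δ ^ 2 := by
        gcongr
        exact hx.le
      linarith [hK]
  have hanti : AntitoneOn f (Set.Icc 0 s) := by
    refine antitoneOn_of_deriv_nonpos (convex_Icc 0 s) ?_ ?_ ?_
    · exact fun x _ => (hf x).continuousAt.continuousWithinAt
    · exact fun x _ => (hf x).differentiableAt.differentiableWithinAt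
    · intro x hx
      rw [interior_Icc] at hx
      rw [(hf x).deriv]
      have h1 : T * stdPdf s ≤ T * stdPdf x :=
        mul_le_mul_of_nonneg_left (hpdf_mono x s hx.1.le hx.2.le) hT0.le
      have h2 : 4 * x / Δ ^ 2 ≤ 4 * s / Δ ^ 2 := by
        gcongr
        exact hx.2.le
      linarith [hK]
  have hmin : ∀ y : ℝ, 0 < y → f s ≤ f y := by
    intro y hy
    rcases le_total y s with h | h
    · exact hanti (Set.mem_Icc.2 ⟨hy.le, h⟩) (Set.mem_Icc.2 ⟨hs0.le, le_rfl⟩) h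
    · exact hmono (Set.mem_Ici.2 le_rfl) (Set.mem_Ici.2 h) h
  -- the argument at the minimiser
  have harg : Real.sqrt ((2 / Δ ^ 2) * w / 2) = s / Δ := by
    rw [show (2 / Δ ^ 2) * w / 2 = w / Δ ^ 2 by ring,
      Real.sqrt_div hw.le, Real.sqrt_sq hΔ.le]
  have hargs : -Δ * Real.sqrt ((2 / Δ ^ 2) * w / 2) = -s := by
    rw [harg]
    field_simp
  refine ⟨Set.mem_Ioi.2 (by positivity), ?_, ?_⟩
  · rw [isMinOn_iff]
    intro x hx
    have hx0 : 0 < x := hx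
    have hx2 : (0:ℝ) ≤ x / 2 := by linarith
    set y := Δ * Real.sqrt (x / 2) with hy
    have hy0 : 0 < y := mul_pos hΔ (Real.sqrt_pos.2 (by linarith))
    have hy2 : y ^ 2 = Δ ^ 2 * (x / 2) := by
      rw [hy, mul_pow, Real.sq_sqrt hx2]
    have hxy : 2 * y ^ 2 / Δ ^ 2 = x := by rw [hy2]; field_simp
    have hgx : x + T * cdf (gaussianReal 0 1) (-Δ * Real.sqrt (x / 2)) = f y := by
      simp only [hfdef]
      rw [hxy, show -Δ * Real.sqrt (x / 2) = -y from by rw [hy]; ring]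
    have hxs : 2 * s ^ 2 / Δ ^ 2 = (2 / Δ ^ 2) * w := by rw [hs2]; ring
    have hgstar : (2 / Δ ^ 2) * w + T * cdf (gaussianReal 0 1)
        (-Δ * Real.sqrt ((2 / Δ ^ 2) * w / 2)) = f s := by
      simp only [hfdef]
      rw [hargs, hxs]
    rw [hgstar, hgx]
    exact hmin y hy0
  · rw [hargs]
    have h1 := gauss_tail hs0
    have hK2 : T * stdPdf s * Δ ^ 2 = 4 * s := by
      rw [hK]
      field_simp
    have h2 : stdPdf s / s = 4 / (T * Δ ^ 2) := by
      rw [div_eq_div_iff hs0.ne' (by positivity)]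
      linear_combination hK2
    linarith [h1, h2.le]
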